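/- Let G be a graph with umbrella-free ordering π, and let π′ = RMN(π) (the ordering produced by the rightmost-neighbor greedy traversal of π). Let x, y ∈ V with xy ∉ E and y <_π x. Then x <_{π′} y. -/

import Mathlib

def UmbrellaFree {V : Type*} [LinearOrder V] (G : SimpleGraph V) : Prop :=
  ∀ x y z : V, x < y → y < z → G.Adj x z → G.Adj x y ∨ G.Adj y z

open Classical in
/-- One run of the RightMost-Neighbor traversal with a fuel parameter: `u` is the set of
unvisited vertices, and the optional argument is the currently visited vertex. From the
current vertex we move to its rightmost (in the linear order σ on `V`) unvisited neighbor
if one exists; otherwise we restart at the rightmost unvisited vertex. -/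
noncomputable def rmnAux {V : Type*} [LinearOrder V] (G : SimpleGraph V) :
    ℕ → Finset V → Option V → List V
  | 0, _, _ => []
  | fuel + 1, u, none =>
      if h : u.Nonempty then
        u.max' h :: rmnAux G fuel (u.erase (u.max' h)) (some (u.max' h))
      else []
  | fuel + 1, u, some c =>
      if h : (u.filter (fun w => G.Adj c w)).Nonempty then
        (u.filter (fun w => G.Adj c w)).max' h ::
          rmnAux G fuel (u.erase ((u.filter (fun w => G.Adj c w)).max' h))
            (some ((u.filter (fun w => G.Adj c w)).max' h))
      else rmnAux G fuel u none

/-- `RMN(σ)`, where σ is the linear order on `V`: the vertex ordering produced by the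
rightmost-neighbor greedy traversal. -/
noncomputable def rmn {V : Type*} [Fintype V] [LinearOrder V] (G : SimpleGraph V) : List V :=
  rmnAux G (2 * Fintype.card V + 1) Finset.univ none

open Classical

/-- Invariant of the RMN traversal: the current vertex (if any) is unvisited-free and
adjacent to all unvisited vertices to its right. -/
def RmnInv {V : Type*} [LinearOrder V] (G : SimpleGraph V) (u : Finset V) :
    Option V → Prop
  | none => True
  | some c => c ∉ u ∧ ∀ w ∈ u, c < w → G.Adj c w

/-- Completeness: with enough fuel, every unvisited vertex appears in the output. -/
lemma rmnAux_mem {V : Type*} [LinearOrder V] (G : SimpleGraph V) :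
    ∀ (fuel : ℕ) (u : Finset V) (s : Option V),
      2 * u.card + (if s.isSome then 1 else 0) ≤ fuel →
      ∀ w ∈ u, w ∈ rmnAux G fuel u s := by
  intro fuel
  induction fuel with
  | zero =>
      intro u s hf w hw
      have : u.card ≠ 0 := Finset.card_ne_zero_of_mem hw
      omega
  | succ n ih =>
      intro u s hf w hw
      match s with
      | none =>
          have hu : u.Nonempty := ⟨w, hw⟩
          rw [rmnAux, dif_pos hu]
          by_cases hwm : w = u.max' hu
          · exact hwm ▸ List.mem_cons_self
          · refine List.mem_cons_of_mem _ (ih _ _ ?_ w (Finset.mem_erase.mpr ⟨hwm, hw⟩))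
            have h1 : (u.erase (u.max' hu)).card = u.card - 1 :=
              Finset.card_erase_of_mem (u.max'_mem hu)
            have h2 : 1 ≤ u.card := Finset.card_pos.mpr hu
            simp only [Option.isSome_none, Option.isSome_some, Bool.false_eq_true,
              if_false, if_true] at hf ⊢
            omega
      | some c =>
          rw [rmnAux]
          by_cases hN : (u.filter (fun w => G.Adj c w)).Nonempty
          · rw [dif_pos hN]
            set m := (u.filter (fun w => G.Adj c w)).max' hN with hm
            have hmu : m ∈ u := (Finset.mem_filter.mp ((u.filter _).max'_mem hN)).1
            by_cases hwm : w = m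
            · exact hwm ▸ List.mem_cons_self
            · refine List.mem_cons_of_mem _ (ih _ _ ?_ w (Finset.mem_erase.mpr ⟨hwm, hw⟩))
              have h1 : (u.erase m).card = u.card - 1 := Finset.card_erase_of_mem hmu
              have h2 : 1 ≤ u.card := Finset.card_pos.mpr ⟨w, hw⟩
              simp only [Option.isSome_some, if_true] at hf ⊢
              omega
          · rw [dif_neg hN]
            refine ih _ _ ?_ w hw
            simp only [Option.isSome_none, Option.isSome_some, Bool.false_eq_true,
              if_false, if_true] at hf ⊢
            omega

/-- Key lemma: under the invariant, if `y < x`, `xy ∉ E` and both are unvisited, then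
whenever `y` appears in the traversal output, `x` appears strictly earlier. -/
lemma rmnAux_before {V : Type*} [LinearOrder V] (G : SimpleGraph V)
    (hUF : UmbrellaFree G) (x y : V) (hne : ¬ G.Adj x y) (hlt : y < x) :
    ∀ (fuel : ℕ) (u : Finset V) (s : Option V), RmnInv G u s → x ∈ u → y ∈ u →
      y ∈ rmnAux G fuel u s →
      x ∈ rmnAux G fuel u s ∧
        (rmnAux G fuel u s).idxOf x < (rmnAux G fuel u s).idxOf y := by
  have hxy : x ≠ y := ne_of_gt hlt
  intro fuel
  induction fuel with
  | zero => intro u s _ _ _ hy; simp [rmnAux] at hy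
  | succ n ih =>
      intro u s hInv hx hy hymem
      match s with
      | none =>
          have hu : u.Nonempty := ⟨x, hx⟩
          rw [rmnAux, dif_pos hu] at hymem ⊢
          set m := u.max' hu with hm
          by_cases hxm : x = m
          · -- x is visited now, and y comes later
            rw [← hxm]
            refine ⟨List.mem_cons_self, ?_⟩
            rw [List.idxOf_cons_self, List.idxOf_cons_ne _ hxy]
            exact Nat.succ_pos _
          · -- x is not the max; note y is not the max either since y < x ≤ m
            have hxlem : x ≤ m := u.le_max' x hx
            have hym : y ≠ m := ne_of_lt (lt_of_lt_of_le hlt hxlem)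
            have hInv' : RmnInv G (u.erase m) (some m) := by
              refine ⟨Finset.notMem_erase _ _, fun w hw hmw => ?_⟩
              exact absurd (u.le_max' w (Finset.mem_erase.mp hw).2) (not_le.mpr hmw)
            have hyrest : y ∈ rmnAux G n (u.erase m) (some m) := by
              rcases List.mem_cons.mp hymem with h | h
              · exact absurd h hym
              · exact h
            obtain ⟨hx', hidx⟩ := ih (u.erase m) (some m) hInv'
              (Finset.mem_erase.mpr ⟨hxm, hx⟩) (Finset.mem_erase.mpr ⟨hym, hy⟩) hyrest
            refine ⟨List.mem_cons_of_mem _ hx', ?_⟩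
            rw [List.idxOf_cons_ne _ (fun h => hxm h.symm),
              List.idxOf_cons_ne _ (fun h => hym h.symm)]
            exact Nat.succ_lt_succ hidx
      | some c =>
          obtain ⟨hcu, hadj⟩ := hInv
          have hxc : x ≠ c := fun h => hcu (h ▸ hx)
          have hyc : y ≠ c := fun h => hcu (h ▸ hy)
          rw [rmnAux] at hymem ⊢
          by_cases hN : (u.filter (fun w => G.Adj c w)).Nonempty
          · rw [dif_pos hN] at hymem ⊢
            set m := (u.filter (fun w => G.Adj c w)).max' hN with hm
            have hmmem := (u.filter (fun w => G.Adj c w)).max'_mem hN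
            have hmu : m ∈ u := (Finset.mem_filter.mp hmmem).1
            have hcm : G.Adj c m := (Finset.mem_filter.mp hmmem).2
            -- generic fact: any unvisited neighbor-candidate below x forces x ∈ filter
            have hxin : c < x → x ∈ u.filter (fun w => G.Adj c w) := fun hcx =>
              Finset.mem_filter.mpr ⟨hx, hadj x hx hcx⟩
            by_cases hxm : x = m
            · rw [← hxm]
              refine ⟨List.mem_cons_self, ?_⟩
              rw [List.idxOf_cons_self, List.idxOf_cons_ne _ hxy]
              exact Nat.succ_pos _
            · -- show y ≠ m
              have hym : y ≠ m := by
                intro hyme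
                -- m = y < x; where is x relative to c?
                rcases lt_trichotomy x c with hxltc | hxeqc | hcltx
                · -- y < x < c and Adj c y; umbrella-free forces Adj x c, so x ∈ filter
                  have hyadjc : G.Adj y c := by rw [hyme]; exact hcm.symm
                  rcases hUF y x c hlt hxltc hyadjc with h | h
                  · exact hne (G.adj_symm h)
                  · have hxf : x ∈ u.filter (fun w => G.Adj c w) :=
                      Finset.mem_filter.mpr ⟨hx, G.adj_symm h⟩
                    have hle := (u.filter (fun w => G.Adj c w)).le_max' x hxf
                    rw [← hm, ← hyme] at hle
                    exact absurd hle (not_le.mpr hlt)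
                · exact hxc hxeqc
                · have hxf : x ∈ u.filter (fun w => G.Adj c w) := hxin hcltx
                  have hle := (u.filter (fun w => G.Adj c w)).le_max' x hxf
                  rw [← hm, ← hyme] at hle
                  exact absurd hle (not_le.mpr hlt)
              -- establish the invariant for the new state
              have hInv' : RmnInv G (u.erase m) (some m) := by
                refine ⟨Finset.notMem_erase _ _, fun w hw hmw => ?_⟩
                obtain ⟨hwm, hwu⟩ := Finset.mem_erase.mp hw
                have hwnotfilter : w ∉ u.filter (fun v => G.Adj c v) := fun hwf =>
                  absurd ((u.filter _).le_max' w hwf) (not_le.mpr hmw)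
                have hwc : w ≠ c := fun h => hcu (h ▸ hwu)
                rcases lt_trichotomy w c with hwltc | hweqc | hcltw
                · -- m < w < c and Adj m c; umbrella-free
                  rcases hUF m w c hmw hwltc hcm.symm with h | h
                  · exact h
                  · exact absurd (Finset.mem_filter.mpr ⟨hwu, G.adj_symm h⟩) hwnotfilter
                · exact absurd hweqc hwc
                · exact absurd (Finset.mem_filter.mpr ⟨hwu, hadj w hwu hcltw⟩) hwnotfilter
              have hyrest : y ∈ rmnAux G n (u.erase m) (some m) := by
                rcases List.mem_cons.mp hymem with h | h
                · exact absurd h hym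
                · exact h
              obtain ⟨hx', hidx⟩ := ih (u.erase m) (some m) hInv'
                (Finset.mem_erase.mpr ⟨hxm, hx⟩) (Finset.mem_erase.mpr ⟨hym, hy⟩) hyrest
              refine ⟨List.mem_cons_of_mem _ hx', ?_⟩
              rw [List.idxOf_cons_ne _ (fun h => hxm h.symm),
                List.idxOf_cons_ne _ (fun h => hym h.symm)]
              exact Nat.succ_lt_succ hidx
          · rw [dif_neg hN] at hymem ⊢
            exact ih u none trivial hx hy hymem

/-- Lemma (auxil-2, RMN part): for an umbrella-free ordering π (the linear order on `V`),
if `xy ∉ E` and `y <_π x`, then `x` precedes `y` in `RMN(π)`. -/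
theorem rmn_reverses_nonedges {V : Type*} [Fintype V] [LinearOrder V] (G : SimpleGraph V)
    (hUF : UmbrellaFree G) (x y : V) (hne : ¬ G.Adj x y) (hlt : y < x) :
    (rmn G).idxOf x < (rmn G).idxOf y := by
  have hymem : y ∈ rmn G := by
    apply rmnAux_mem G _ Finset.univ none _ y (Finset.mem_univ y)
    simp [Finset.card_univ]
  exact (rmnAux_before G hUF x y hne hlt _ Finset.univ none trivial
    (Finset.mem_univ x) (Finset.mem_univ y) hymem).2
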